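/- The family SZ(ℝ) of Sierpiński–Zygmund functions has property B(d_𝔠, d_𝔠): there exists a set 𝓑 of ℝ-linear subspaces of ℝ^ℝ with #𝓑 ≥ d_𝔠 such that every B ∈ 𝓑 satisfies B ⊆ SZ(ℝ) ∪ {0} and dim_ℝ B ≥ d_𝔠, and SZ(ℝ) ∪ {0} = ⋃ 𝓑. -/

import Mathlib

open Cardinal Set Filter Topology

/-- `f` is a Sierpiński–Zygmund function: `f` is not continuous on any set of
cardinality `𝔠`. -/
def IsSierpinskiZygmund (f : ℝ → ℝ) : Prop :=
  ∀ S : Set ℝ, #S = Cardinal.continuum → ¬ ContinuousOn f S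

/-- The cardinal `d_𝔠`: the least cardinality of a family `F ⊆ ℝ^ℝ` such that every
`φ : ℝ → ℝ` agrees with some member of `F` on a set of cardinality `𝔠`. -/
noncomputable def dContinuum : Cardinal :=
  sInf {c : Cardinal | ∃ F : Set (ℝ → ℝ), #F = c ∧
    ∀ φ : ℝ → ℝ, ∃ f ∈ F, #{x : ℝ | f x = φ x} = Cardinal.continuum}

/-! ### The family of "canonical" partially continuous functions -/

open scoped Classical in
noncomputable def phiExt (p : ℕ → ℝ × ℝ) : ℝ → ℝ :=
  fun y => if h : ∃ n, (p n).1 = y then (p h.choose).2 else 0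

open scoped Classical in
noncomputable def PhiFun (p : ℕ → ℝ × ℝ) : ℝ → ℝ := fun x =>
  if ∃ n, (p n).1 = x then phiExt p x
  else if h : ∃ L, Tendsto (phiExt p) (nhdsWithin x {y | ∃ n, (p n).1 = y}) (nhds L)
    then h.choose else 0

noncomputable def gSet : Set (ℝ → ℝ) := insert 0 (Set.range PhiFun)

lemma mk_gSet_le : #gSet ≤ continuum := by
  have h1 : #(Set.range PhiFun) ≤ #(ℕ → ℝ × ℝ) := Cardinal.mk_range_le
  have h2 : #(ℕ → ℝ × ℝ) ≤ continuum := by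
    rw [← Cardinal.power_def]
    have hprod : #(ℝ × ℝ) = 𝔠 := by
      simp [Cardinal.mk_prod, Cardinal.mk_real, Cardinal.continuum_mul_self]
    rw [hprod, Cardinal.mk_nat]
    rw [← Cardinal.two_power_aleph0, ← Cardinal.power_mul, Cardinal.aleph0_mul_aleph0,
      Cardinal.two_power_aleph0]
  have := Cardinal.mk_insert_le (s := Set.range PhiFun) (a := (0 : ℝ → ℝ))
  refine this.trans ?_
  have : #(Set.range PhiFun) + 1 ≤ 𝔠 + 1 := add_le_add_left (h1.trans h2) 1
  refine this.trans ?_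
  simp [Cardinal.add_one_eq Cardinal.aleph0_le_continuum]

lemma gSet_covers {F : ℝ → ℝ} {S : Set ℝ} (hS : #S = continuum) (hc : ContinuousOn F S) :
    ∃ g ∈ gSet, #{x : ℝ | F x = g x} = continuum := by
  have hSne : S.Nonempty := by
    rw [Set.nonempty_iff_ne_empty]
    rintro rfl
    simp at hS
    exact (continuum_ne_zero hS.symm).elim
  obtain ⟨t, htc, htd⟩ := TopologicalSpace.exists_countable_dense (↥S)
  have hDc : (Subtype.val '' t : Set ℝ).Countable := htc.image _
  have hDsub : Subtype.val '' t ⊆ S := by rintro x ⟨y, _, rfl⟩; exact y.2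
  have hDne : (Subtype.val '' t).Nonempty := by
    rcases hSne with ⟨x, hx⟩
    have h1 : (⟨x, hx⟩ : ↥S) ∈ closure t := by rw [htd.closure_eq]; trivial
    rcases t.eq_empty_or_nonempty with rfl | ⟨y, hy⟩
    · simp at h1
    · exact ⟨y, y, hy, rfl⟩
  obtain ⟨u, hu⟩ := hDc.exists_eq_range hDne
  set p : ℕ → ℝ × ℝ := fun n => (u n, F (u n)) with hp
  have hclo : ∀ x ∈ S, x ∈ closure (Subtype.val '' t) := by
    intro x hx
    have : (⟨x, hx⟩ : ↥S) ∈ closure t := by rw [htd.closure_eq]; trivial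
    exact closure_subtype.mp this
  have hvF : ∀ y ∈ (Subtype.val '' t : Set ℝ), phiExt p y = F y := by
    intro y hy
    rw [hu] at hy
    obtain ⟨n, rfl⟩ := hy
    have h : ∃ m, (p m).1 = u n := ⟨n, rfl⟩
    simp only [phiExt, dif_pos h]
    exact congrArg F h.choose_spec
  have hdomeq : {y | ∃ n, (p n).1 = y} = Subtype.val '' t := by
    rw [hu]; ext y; simp [hp, Set.range, eq_comm]
  have key : ∀ x ∈ S, PhiFun p x = F x := by
    intro x hx
    by_cases hxD : ∃ n, (p n).1 = x
    · simp only [PhiFun, if_pos hxD]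
      have hxD' : x ∈ (Subtype.val '' t : Set ℝ) := by rw [← hdomeq]; exact hxD
      exact hvF x hxD'
    · simp only [PhiFun, if_neg hxD]
      have hne : (nhdsWithin x {y | ∃ n, (p n).1 = y}).NeBot := by
        rw [hdomeq]
        exact mem_closure_iff_nhdsWithin_neBot.mp (hclo x hx)
      have htend : Tendsto (phiExt p) (nhdsWithin x {y | ∃ n, (p n).1 = y}) (nhds (F x)) := by
        have h1 : ContinuousWithinAt F S x := hc x hx
        have h2 : Tendsto F (nhdsWithin x (Subtype.val '' t)) (nhds (F x)) := h1.mono hDsub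
        rw [hdomeq]
        refine h2.congr' ?_
        filter_upwards [self_mem_nhdsWithin] with y hy
        exact (hvF y hy).symm
      have hex : ∃ L, Tendsto (phiExt p) (nhdsWithin x {y | ∃ n, (p n).1 = y}) (nhds L) :=
        ⟨F x, htend⟩
      rw [dif_pos hex]
      exact tendsto_nhds_unique hex.choose_spec htend
  refine ⟨PhiFun p, Set.mem_insert_of_mem _ ⟨p, rfl⟩, ?_⟩
  have hsub : S ⊆ {x | F x = PhiFun p x} := fun x hx => (key x hx).symm
  refine le_antisymm ((Cardinal.mk_set_le _).trans_eq Cardinal.mk_real) ?_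
  calc continuum = #S := hS.symm
    _ ≤ #{x | F x = PhiFun p x} := Cardinal.mk_le_mk_of_subset hsub

/-! ### Basic facts about `dContinuum` -/

lemma dContinuum_le_of_witness {F : Set (ℝ → ℝ)}
    (hw : ∀ φ : ℝ → ℝ, ∃ f ∈ F, #{x : ℝ | f x = φ x} = Cardinal.continuum) :
    dContinuum ≤ #F :=
  csInf_le' ⟨F, rfl, hw⟩

lemma not_witness_of_le_continuum {F : Set (ℝ → ℝ)} (hF : #F ≤ continuum) :
    ¬ ∀ φ : ℝ → ℝ, ∃ f ∈ F, #{x : ℝ | f x = φ x} = Cardinal.continuum := by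
  intro hw
  have h1 : #F ≤ #(continuum.ord.ToType) := by rwa [mk_ord_toType]
  obtain ⟨ι⟩ := Cardinal.le_def _ _ |>.mp h1
  have h2 : #ℝ = #(continuum.ord.ToType) := by rw [Cardinal.mk_real, mk_ord_toType]
  obtain ⟨e⟩ := Cardinal.eq.mp h2
  have hIic : ∀ z : continuum.ord.ToType, #(Iic z) < continuum := by
    intro z
    have hsub : Iic z ⊆ insert z (Iio z) := by
      intro w hw'
      rcases lt_or_eq_of_le (mem_Iic.mp hw') with h | h
      · exact Set.mem_insert_of_mem _ h
      · exact h ▸ Set.mem_insert _ _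
    refine (Cardinal.mk_le_mk_of_subset hsub).trans_lt ?_
    refine (Cardinal.mk_insert_le).trans_lt ?_
    exact Cardinal.add_lt_of_lt aleph0_le_continuum (Cardinal.mk_Iio_ord_toType z)
      (lt_of_lt_of_le Cardinal.one_lt_aleph0 aleph0_le_continuum)
  have hex : ∀ x : ℝ, ∃ y : ℝ, y ∉ {z | ∃ f : F, ι f ≤ e x ∧ z = (f : ℝ → ℝ) x} := by
    intro x
    by_contra hcon
    push_neg at hcon
    have huniv : {z | ∃ f : F, ι f ≤ e x ∧ z = (f : ℝ → ℝ) x} = Set.univ :=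
      Set.eq_univ_of_forall hcon
    have hle : #{z | ∃ f : F, ι f ≤ e x ∧ z = (f : ℝ → ℝ) x} < continuum := by
      have hr : {z | ∃ f : F, ι f ≤ e x ∧ z = (f : ℝ → ℝ) x} ⊆
          Set.range (fun q : {f : F // ι f ≤ e x} => (q.1 : ℝ → ℝ) x) := by
        rintro z ⟨f, hf, rfl⟩
        exact ⟨⟨f, hf⟩, rfl⟩
      refine (Cardinal.mk_le_mk_of_subset hr).trans_lt ?_
      refine Cardinal.mk_range_le.trans_lt ?_
      have hinj : Function.Injective
          (fun q : {f : F // ι f ≤ e x} => (⟨ι q.1, q.2⟩ : Iic (e x))) := by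
        rintro ⟨f, hf⟩ ⟨g, hg⟩ h
        simp only [Subtype.mk_eq_mk] at h
        exact Subtype.ext (ι.injective (congrArg Subtype.val h))
      exact (Cardinal.mk_le_of_injective hinj).trans_lt (hIic (e x))
    rw [huniv] at hle
    simp [Cardinal.mk_real] at hle
  choose φ hφ using hex
  obtain ⟨f, hfF, hcard⟩ := hw φ
  have hsub : {x | f x = φ x} ⊆ e ⁻¹' (Iio (ι ⟨f, hfF⟩)) := by
    intro x hx
    simp only [Set.mem_preimage, Set.mem_Iio]
    by_contra hcon
    exact hφ x ⟨⟨f, hfF⟩, not_lt.mp hcon, hx.symm⟩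
  have hlt : #{x | f x = φ x} < continuum := by
    refine (Cardinal.mk_le_mk_of_subset hsub).trans_lt ?_
    have : #(e ⁻¹' (Iio (ι ⟨f, hfF⟩))) = #(Iio (ι ⟨f, hfF⟩)) :=
      Cardinal.mk_preimage_of_injective_of_subset_range e _ e.injective
        (by intro z _; exact ⟨e.symm z, e.apply_symm_apply z⟩)
    rw [this]
    exact Cardinal.mk_Iio_ord_toType _
  exact hlt.ne hcard

lemma continuum_lt_dContinuum : continuum < dContinuum := by
  have hne : {c : Cardinal | ∃ F : Set (ℝ → ℝ), #F = c ∧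
      ∀ φ : ℝ → ℝ, ∃ f ∈ F, #{x : ℝ | f x = φ x} = Cardinal.continuum}.Nonempty := by
    refine ⟨#(Set.univ : Set (ℝ → ℝ)), Set.univ, rfl, fun φ => ⟨φ, Set.mem_univ _, ?_⟩⟩
    simp [Cardinal.mk_real]
  have hmem := csInf_mem hne
  obtain ⟨F, hFc, hw⟩ := hmem
  rw [dContinuum, ← hFc]
  by_contra hcon
  exact not_witness_of_le_continuum (not_lt.mp hcon) hw

lemma exists_avoid {H : Set (ℝ → ℝ)} (hH : #H < dContinuum) :
    ∃ φ : ℝ → ℝ, ∀ h ∈ H, #{x : ℝ | h x = φ x} < continuum := by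
  by_contra hcon
  push_neg at hcon
  have hw : ∀ φ : ℝ → ℝ, ∃ f ∈ H, #{x : ℝ | f x = φ x} = Cardinal.continuum := by
    intro φ
    obtain ⟨f, hf, hc⟩ := hcon φ
    exact ⟨f, hf, le_antisymm ((Cardinal.mk_set_le _).trans_eq Cardinal.mk_real) hc⟩
  exact absurd (dContinuum_le_of_witness hw) (not_le.mpr hH)

/-! ### Cardinality of spans -/

lemma exists_list_of_mem_span {s : Set (ℝ → ℝ)} {y : ℝ → ℝ} (hy : y ∈ Submodule.span ℝ s) :
    ∃ l : List (ℝ × s), y = (l.map fun q => q.1 • (q.2 : ℝ → ℝ)).sum := by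
  induction hy using Submodule.span_induction with
  | mem x h => exact ⟨[(1, ⟨x, h⟩)], by simp⟩
  | zero => exact ⟨[], by simp⟩
  | add x y hx hy ihx ihy =>
      obtain ⟨l1, rfl⟩ := ihx
      obtain ⟨l2, rfl⟩ := ihy
      exact ⟨l1 ++ l2, by simp⟩
  | smul a x hx ih =>
      obtain ⟨l, rfl⟩ := ih
      refine ⟨l.map fun q => (a * q.1, q.2), ?_⟩
      rw [List.smul_sum, List.map_map, List.map_map]
      congr 1
      ext q
      simp [Function.comp, mul_smul]

lemma mk_span_le (s : Set (ℝ → ℝ)) :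
    #(Submodule.span ℝ s) ≤ max ℵ₀ (𝔠 * #s) := by
  have hmem : ∀ l : List (ℝ × s), (l.map fun q => q.1 • (q.2 : ℝ → ℝ)).sum ∈
      Submodule.span ℝ s := by
    intro l
    induction l with
    | nil => simp
    | cons q l ih =>
        simp only [List.map_cons, List.sum_cons]
        exact Submodule.add_mem _ (Submodule.smul_mem _ _ (Submodule.subset_span q.2.2)) ih
  have hsurj : Function.Surjective
      (fun l : List (ℝ × s) => (⟨(l.map fun q => q.1 • (q.2 : ℝ → ℝ)).sum, hmem l⟩ :
        Submodule.span ℝ s)) := by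
    rintro ⟨y, hy⟩
    obtain ⟨l, rfl⟩ := exists_list_of_mem_span hy
    exact ⟨l, rfl⟩
  refine (Cardinal.mk_le_of_surjective hsurj).trans ?_
  refine (Cardinal.mk_list_le_max _).trans ?_
  have : #(ℝ × s) = 𝔠 * #s := by
    simp [Cardinal.mk_prod, Cardinal.mk_real]
  rw [this]

/-! ### The transfinite construction -/

abbrev Iota : Type := dContinuum.ord.ToType

noncomputable def Hset (f₀ : ℝ → ℝ) (P : Set (ℝ → ℝ)) : Set (ℝ → ℝ) :=
  Set.range (fun t : gSet × ℝ × (Submodule.span ℝ (insert f₀ P)) =>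
    t.2.1⁻¹ • ((t.1 : ℝ → ℝ) - (t.2.2 : ℝ → ℝ)))

lemma mk_Hset_lt (f₀ : ℝ → ℝ) {P : Set (ℝ → ℝ)} (hP : #P < dContinuum) :
    #(Hset f₀ P) < dContinuum := by
  have hℵ : ℵ₀ ≤ dContinuum := aleph0_le_continuum.trans continuum_lt_dContinuum.le
  have hc : 𝔠 < dContinuum := continuum_lt_dContinuum
  have hspan : #(Submodule.span ℝ (insert f₀ P)) < dContinuum := by
    refine (mk_span_le _).trans_lt ?_
    have hins : #(insert f₀ P : Set (ℝ → ℝ)) < dContinuum := by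
      refine (Cardinal.mk_insert_le).trans_lt ?_
      exact Cardinal.add_lt_of_lt hℵ hP (lt_of_lt_of_le Cardinal.one_lt_aleph0 hℵ)
    exact max_lt (aleph0_le_continuum.trans_lt hc) (Cardinal.mul_lt_of_lt hℵ hc hins)
  refine Cardinal.mk_range_le.trans_lt ?_
  have h1 : #(gSet × ℝ × (Submodule.span ℝ (insert f₀ P)))
      = #gSet * (𝔠 * #(Submodule.span ℝ (insert f₀ P))) := by
    simp [Cardinal.mk_prod, Cardinal.mk_real]
  rw [h1]
  exact Cardinal.mul_lt_of_lt hℵ (mk_gSet_le.trans_lt hc) (Cardinal.mul_lt_of_lt hℵ hc hspan)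

noncomputable def szStep (f₀ : ℝ → ℝ) (i : Iota) (prev : ∀ j : Iota, j < i → (ℝ → ℝ)) :
    ℝ → ℝ :=
  (exists_avoid (H := Hset f₀ {y | ∃ j, ∃ hj : j < i, prev j hj = y})
    (mk_Hset_lt f₀ (by
      have hsub : {y | ∃ j, ∃ hj : j < i, prev j hj = y} ⊆
          Set.range (fun j : Iio i => prev j.1 j.2) := by
        rintro y ⟨j, hj, rfl⟩
        exact ⟨⟨j, hj⟩, rfl⟩
      exact ((Cardinal.mk_le_mk_of_subset hsub).trans Cardinal.mk_range_le).trans_lt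
        (Cardinal.mk_Iio_ord_toType i)))).choose

noncomputable def szF (f₀ : ℝ → ℝ) : Iota → (ℝ → ℝ) :=
  (IsWellFounded.wf (r := ((· < ·) : Iota → Iota → Prop))).fix (szStep f₀)

lemma szF_spec (f₀ : ℝ → ℝ) (i : Iota) :
    ∀ h ∈ Hset f₀ (szF f₀ '' Iio i), #{x : ℝ | h x = szF f₀ i x} < continuum := by
  intro h hh
  have heq : szF f₀ i = szStep f₀ i (fun j _ => szF f₀ j) :=
    WellFounded.fix_eq _ _ _
  rw [heq]
  have hset : (szF f₀ '' Iio i) = {y | ∃ j, ∃ hj : j < i, szF f₀ j = y} := by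
    ext y
    constructor
    · rintro ⟨j, hj, rfl⟩; exact ⟨j, hj, rfl⟩
    · rintro ⟨j, hj, rfl⟩; exact ⟨j, hj, rfl⟩
  rw [hset] at hh
  unfold szStep
  exact (exists_avoid (H := Hset f₀ {y | ∃ j, ∃ hj : j < i, szF f₀ j = y})
    (mk_Hset_lt f₀ (by
      have hsub : {y | ∃ j, ∃ hj : j < i, szF f₀ j = y} ⊆
          Set.range (fun j : Iio i => szF f₀ j.1) := by
        rintro y ⟨j, hj, rfl⟩
        exact ⟨⟨j, hj⟩, rfl⟩
      exact ((Cardinal.mk_le_mk_of_subset hsub).trans Cardinal.mk_range_le).trans_lt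
        (Cardinal.mk_Iio_ord_toType i)))).choose_spec h hh

/-! ### The key lemma -/

lemma szKey (f₀ : ℝ → ℝ) (a : ℝ) (c : Iota →₀ ℝ) (hc : c ≠ 0) {g : ℝ → ℝ} (hg : g ∈ gSet) :
    #{x : ℝ | (a • f₀ + c.sum fun i b => b • szF f₀ i) x = g x} < continuum := by
  set e := szF f₀ with he
  have hne : c.support.Nonempty := Finsupp.support_nonempty_iff.mpr hc
  set β := c.support.max' hne with hβ
  have hβmem : β ∈ c.support := c.support.max'_mem hne
  have hcβ : c β ≠ 0 := Finsupp.mem_support_iff.mp hβmem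
  set w : ℝ → ℝ := a • f₀ + ∑ γ ∈ c.support.erase β, c γ • e γ with hw
  have hsplit : (a • f₀ + c.sum fun i b => b • e i) = w + c β • e β := by
    rw [Finsupp.sum, ← Finset.add_sum_erase _ _ hβmem, hw]
    abel
  have hwmem : w ∈ Submodule.span ℝ (insert f₀ (e '' Iio β)) := by
    apply Submodule.add_mem
    · exact Submodule.smul_mem _ _ (Submodule.subset_span (Set.mem_insert _ _))
    · apply Submodule.sum_mem
      intro γ hγ
      have hγβ : γ < β := lt_of_le_of_ne
        (Finset.le_max' _ _ (Finset.mem_of_mem_erase hγ)) (Finset.ne_of_mem_erase hγ)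
      exact Submodule.smul_mem _ _
        (Submodule.subset_span (Set.mem_insert_of_mem _ ⟨γ, hγβ, rfl⟩))
  have hH : (c β)⁻¹ • (g - w) ∈ Hset f₀ (e '' Iio β) :=
    ⟨(⟨g, hg⟩, c β, ⟨w, hwmem⟩), rfl⟩
  have hspec := szF_spec f₀ β _ hH
  have hseteq : {x : ℝ | (a • f₀ + c.sum fun i b => b • e i) x = g x}
      = {x : ℝ | ((c β)⁻¹ • (g - w)) x = e β x} := by
    ext x
    rw [hsplit]
    simp only [Set.mem_setOf_eq, Pi.add_apply, Pi.smul_apply, Pi.sub_apply, smul_eq_mul]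
    rw [inv_mul_eq_iff_eq_mul₀ hcβ]
    constructor
    · intro h; linarith
    · intro h; linarith
  rw [hseteq]
  exact hspec

lemma szMain (f₀ : ℝ → ℝ) :
    LinearIndependent ℝ (szF f₀) ∧
    ∀ y ∈ Submodule.span ℝ (insert f₀ (Set.range (szF f₀))),
      (∃ a : ℝ, y = a • f₀) ∨ IsSierpinskiZygmund y := by
  constructor
  · rw [linearIndependent_iff]
    intro l hl
    by_contra hlne
    have h0 : (0 : ℝ → ℝ) ∈ gSet := Set.mem_insert _ _
    have hkey := szKey f₀ 0 l hlne h0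
    rw [Finsupp.linearCombination_apply] at hl
    have hset : {x : ℝ | ((0:ℝ) • f₀ + l.sum fun i b => b • szF f₀ i) x = (0 : ℝ → ℝ) x}
        = Set.univ := by
      ext x
      simp [hl]
    rw [hset, Cardinal.mk_univ, Cardinal.mk_real] at hkey
    exact absurd hkey (lt_irrefl _)
  · intro y hy
    rw [Submodule.mem_span_insert] at hy
    obtain ⟨a, z, hz, rfl⟩ := hy
    rw [Finsupp.mem_span_range_iff_exists_finsupp] at hz
    obtain ⟨c, rfl⟩ := hz
    by_cases hc : c = 0
    · subst hc
      left
      exact ⟨a, by simp⟩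
    · right
      intro S hS hcont
      obtain ⟨g, hg, hgc⟩ := gSet_covers hS hcont
      exact absurd hgc (szKey f₀ a c hc hg).ne

/-! ### Auxiliary facts -/

lemma isSZ_smul {f : ℝ → ℝ} (hf : IsSierpinskiZygmund f) {a : ℝ} (ha : a ≠ 0) :
    IsSierpinskiZygmund (a • f) := by
  intro S hS hcont
  apply hf S hS
  have : ContinuousOn (a⁻¹ • (a • f)) S := hcont.const_smul a⁻¹
  rwa [smul_smul, inv_mul_cancel₀ ha, one_smul] at this

theorem sierpinskiZygmund_property_B :
    ∃ 𝓑 : Set (Submodule ℝ (ℝ → ℝ)),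
      dContinuum ≤ #𝓑 ∧
      (∀ B ∈ 𝓑, (B : Set (ℝ → ℝ)) ⊆ {f | IsSierpinskiZygmund f} ∪ {0} ∧
        dContinuum ≤ Module.rank ℝ B) ∧
      {f | IsSierpinskiZygmund f} ∪ {0} = ⋃ B ∈ 𝓑, (B : Set (ℝ → ℝ)) := by
  have hmk : #Iota = dContinuum := mk_ord_toType _
  have hℵ : ℵ₀ < dContinuum := aleph0_le_continuum.trans_lt continuum_lt_dContinuum
  have hinf : Infinite Iota := by
    rw [Cardinal.infinite_iff, hmk]
    exact hℵ.le
  obtain ⟨hli0, hsp0⟩ := szMain 0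
  set e0 := szF 0 with he0
  -- the family of subspaces
  set W : Iota → Submodule ℝ (ℝ → ℝ) := fun α => Submodule.span ℝ (e0 '' {α}ᶜ) with hW
  set V : (ℝ → ℝ) → Submodule ℝ (ℝ → ℝ) :=
    fun f => Submodule.span ℝ (insert f (Set.range (szF f))) with hV
  have hsubset : ∀ B ∈ Set.range W ∪ (V '' {f | IsSierpinskiZygmund f}),
      (B : Set (ℝ → ℝ)) ⊆ {f | IsSierpinskiZygmund f} ∪ {0} := by
    rintro B (⟨α, rfl⟩ | ⟨f, hf, rfl⟩)
    · intro y hy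
      have hy' : y ∈ Submodule.span ℝ (insert (0 : ℝ → ℝ) (Set.range e0)) := by
        refine Submodule.span_mono ?_ hy
        rintro z ⟨γ, _, rfl⟩
        exact Set.mem_insert_of_mem _ ⟨γ, rfl⟩
      rcases hsp0 y hy' with ⟨a, rfl⟩ | hsz
      · right; simp
      · left; exact hsz
    · intro y hy
      rcases (szMain f).2 y hy with ⟨a, rfl⟩ | hsz
      · by_cases ha : a = 0
        · right; simp [ha]
        · left; exact isSZ_smul hf ha
      · left; exact hsz
  have hrank : ∀ B ∈ Set.range W ∪ (V '' {f | IsSierpinskiZygmund f}),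
      dContinuum ≤ Module.rank ℝ B := by
    have hgen : ∀ (f₀ : ℝ → ℝ) (s : Set Iota), #s = dContinuum →
        dContinuum ≤ Module.rank ℝ (Submodule.span ℝ (szF f₀ '' s)) := by
      intro f₀ s hs
      have hli : LinearIndependent ℝ (fun j : s => szF f₀ j) :=
        (szMain f₀).1.comp _ Subtype.val_injective
      have hr := rank_span hli
      rw [← Set.image_eq_range] at hr
      rw [hr]
      have : #(szF f₀ '' s) = #s :=
        Cardinal.mk_image_eq_of_injOn _ _ ((szMain f₀).1.injective.injOn)
      rw [this, hs]
    rintro B (⟨α, rfl⟩ | ⟨f, hf, rfl⟩)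
    · refine hgen 0 ({α}ᶜ) ?_
      rw [← hmk]
      refine Cardinal.mk_compl_of_infinite _ ?_
      rw [Cardinal.mk_singleton]
      exact Cardinal.one_lt_aleph0.trans_le (Cardinal.infinite_iff.mp hinf)
    · refine le_trans (hgen f Set.univ (by rw [Cardinal.mk_univ, hmk])) ?_
      refine Submodule.rank_mono (Submodule.span_le.mpr ?_)
      rintro z ⟨γ, _, rfl⟩
      exact Submodule.subset_span (Set.mem_insert_of_mem _ ⟨γ, rfl⟩)
  refine ⟨Set.range W ∪ (V '' {f | IsSierpinskiZygmund f}), ?_,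
    fun B hB => ⟨hsubset B hB, hrank B hB⟩, ?_⟩
  · -- cardinality
    have hWinj : Function.Injective W := by
      intro α α' hWa
      by_contra hne
      have h1 : e0 α ∈ W α' := Submodule.subset_span ⟨α, by simp [hne], rfl⟩
      rw [← hWa] at h1
      have h2 : e0 α ∉ W α := LinearIndependent.notMem_span_image hli0 (by simp)
      exact h2 h1
    calc dContinuum = #Iota := hmk.symm
      _ = #(Set.range W) := (Cardinal.mk_range_eq W hWinj).symm
      _ ≤ _ := Cardinal.mk_le_mk_of_subset Set.subset_union_left
  · apply Set.Subset.antisymm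
    · rintro y (hy | hy)
      · refine Set.mem_biUnion (Set.mem_union_right _ ⟨y, hy, rfl⟩) ?_
        exact Submodule.subset_span (Set.mem_insert _ _)
      · simp only [Set.mem_singleton_iff] at hy
        subst hy
        obtain ⟨α⟩ := (inferInstance : Nonempty Iota)
        exact Set.mem_biUnion (Set.mem_union_left _ ⟨α, rfl⟩) (Submodule.zero_mem _)
    · exact Set.iUnion₂_subset hsubset
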